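/- Let −1 < α ≤ β < 1, set p = 2/(1−α), p' = 2/(1−β), with conjugate exponents q, q'. Then for every t ≥ 0, (1/p')·g_{p'}(t) ≤ (1/p)·g_p(t), where g_p(t) = p + q·t − p·q·t^{1/p}. -/

import Mathlib

/-- Key scalar inequality: for `0 < b ≤ a < 1` and `t ≥ 0`,
`(1 - b + b*t - t^b)/(1-b) ≤ (1 - a + a*t - t^a)/(1-a)`. -/
lemma gp_key (a b t : ℝ) (hb0 : 0 < b) (hba : b ≤ a) (ha1 : a < 1) (ht : 0 ≤ t) :
    (1 - b + b * t - t ^ b) / (1 - b) ≤ (1 - a + a * t - t ^ a) / (1 - a) := by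
  have h1a : 0 < 1 - a := by linarith
  have h1b : 0 < 1 - b := by linarith
  set l : ℝ := (1 - a) / (1 - b) with hl
  have hll : l * (1 - b) = 1 - a := by
    rw [hl]; field_simp
  have hl0 : 0 ≤ l := by positivity
  have hl1 : l ≤ 1 := by
    rw [hl, div_le_one h1b]; linarith
  have hgm := Real.geom_mean_le_arith_mean2_weighted hl0 (by linarith : (0:ℝ) ≤ 1 - l)
    (Real.rpow_nonneg ht b) ht (by ring)
  have hE : (t ^ b) ^ l * t ^ (1 - l) = t ^ a := by
    rw [← Real.rpow_mul ht, ← Real.rpow_add' ht (by nlinarith : b * l + (1 - l) ≠ 0)]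
    congr 1
    linear_combination -hll
  rw [hE] at hgm
  have h2 : t ^ a * (1 - b) ≤ (1 - a) * t ^ b + (a - b) * t := by
    have hm := mul_le_mul_of_nonneg_right hgm h1b.le
    have e : (l * t ^ b + (1 - l) * t) * (1 - b) = (1 - a) * t ^ b + (a - b) * t := by
      linear_combination (t ^ b - t) * hll
    linarith
  rw [div_le_div_iff₀ h1b h1a]
  nlinarith [h2]

/-- For `−1 < α ≤ β < 1`, with `p = 2/(1−α)`, `p' = 2/(1−β)` and their Hölder
conjugates `q, q'`, one has `(1/p')·g_{p'}(t) ≤ (1/p)·g_p(t)` for all `t ≥ 0`,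
where `g_p(t) = p + q·t − p·q·t^(1/p)`. -/
theorem gp_comparison (α β p p' q q' : ℝ)
    (hα : -1 < α) (hαβ : α ≤ β) (hβ : β < 1)
    (hp : p = 2 / (1 - α)) (hp' : p' = 2 / (1 - β))
    (hq : 1 / p + 1 / q = 1) (hq' : 1 / p' + 1 / q' = 1)
    (t : ℝ) (ht : 0 ≤ t) :
    (1 / p') * (p' + q' * t - p' * q' * t ^ (1 / p')) ≤
      (1 / p) * (p + q * t - p * q * t ^ (1 / p)) := by
  have hA : 1 / p = (1 - α) / 2 := by rw [hp, one_div_div]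
  have hA' : 1 / p' = (1 - β) / 2 := by rw [hp', one_div_div]
  have ha0 : 0 < 1 / p := by rw [hA]; linarith
  have ha1 : 1 / p < 1 := by rw [hA]; linarith
  have hb0 : 0 < 1 / p' := by rw [hA']; linarith
  have hb1 : 1 / p' < 1 := by rw [hA']; linarith
  have hba : 1 / p' ≤ 1 / p := by rw [hA, hA']; linarith
  have hp0 : 0 < p := one_div_pos.mp ha0
  have hp'0 : 0 < p' := one_div_pos.mp hb0
  have hp1 : 1 < p := (div_lt_one hp0).mp ha1
  have hp'1 : 1 < p' := (div_lt_one hp'0).mp hb1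
  have hpm : -1 + p ≠ 0 := by linarith
  have hp'm : -1 + p' ≠ 0 := by linarith
  have hq0 : 0 < q := by
    have h1 : 0 < 1 / q := by linarith
    exact one_div_pos.mp h1
  have hq'0 : 0 < q' := by
    have h1 : 0 < 1 / q' := by linarith
    exact one_div_pos.mp h1
  have hqe : q = 1 / (1 - 1 / p) := by
    have h1 : 1 / q = 1 - 1 / p := by linarith
    rw [← h1, one_div_one_div]
  have hq'e : q' = 1 / (1 - 1 / p') := by
    have h1 : 1 / q' = 1 - 1 / p' := by linarith
    rw [← h1, one_div_one_div]
  have hane : (1 : ℝ) - 1 / p ≠ 0 := by linarith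
  have hbne : (1 : ℝ) - 1 / p' ≠ 0 := by linarith
  have e1 : (1 / p) * (p + q * t - p * q * t ^ (1 / p))
      = (1 - 1 / p + (1 / p) * t - t ^ (1 / p)) / (1 - 1 / p) := by
    rw [hqe, eq_div_iff hane]
    have hpe : p ≠ 0 := hp0.ne'
    field_simp
    linear_combination (t - p * t ^ (1 / p)) * mul_inv_cancel₀ hpm
  have e2 : (1 / p') * (p' + q' * t - p' * q' * t ^ (1 / p'))
      = (1 - 1 / p' + (1 / p') * t - t ^ (1 / p')) / (1 - 1 / p') := by
    rw [hq'e, eq_div_iff hbne]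
    have hpe : p' ≠ 0 := hp'0.ne'
    field_simp
    linear_combination (t - p' * t ^ (1 / p')) * mul_inv_cancel₀ hp'm
  rw [e1, e2]
  exact gp_key (1 / p) (1 / p') t hb0 hba ha1 ht
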